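/- Let C = (c_{ij})_{i,j∈I} be a generalized Cartan matrix and χ a bicharacter on ℤ^I with values in 𝕜∖{0} such that χ is i-finite for all i ∈ I with c^χ_{ij} = c_{ij} for all i,j ∈ I, and q_{ii}^{c_{ij}} = q_{ij} q_{ji} for all i,j ∈ I (χ is of Cartan type). Then for every p ∈ I: r_p(χ)(ε_i,ε_i) = q_{ii} and r_p(χ)(ε_i,ε_j) · r_p(χ)(ε_j,ε_i) = r_p(χ)(ε_i,ε_i)^{c_{ij}} for all i,j ∈ I; that is, r_p(χ) is again of Cartan type with the same Cartan matrix C. Moreover, if in addition there are positive integers d_i with d_i c_{ij} = d_j c_{ji} for all i,j ∈ I and an element q ∈ 𝕜∖{0} with q_{ij} = q^{d_i c_{ij}} for all i,j ∈ I, then r_p(χ) = χ for all p ∈ I. -/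

import Mathlib

/-- The quantum integer `[n]_q = 1 + q + ⋯ + q^{n-1}` for `n ∈ ℕ`. -/
def qNat {𝕜 : Type*} [Field 𝕜] (q : 𝕜) (n : ℕ) : 𝕜 :=
  ∑ i ∈ Finset.range n, q ^ i

/-- The quantum factorial `[n]_q! = [1]_q [2]_q ⋯ [n]_q`. -/
def qFact {𝕜 : Type*} [Field 𝕜] (q : 𝕜) (n : ℕ) : 𝕜 :=
  ∏ i ∈ Finset.range n, qNat q (i + 1)

variable {𝕜 : Type*} [Field 𝕜] {I : Type*} [Fintype I] [DecidableEq I]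

/-- The standard basis vector `ε_i` of `ℤ^I`. -/
def eps (i : I) : I → ℤ := Pi.single i 1

/-- `χ : ℤ^I × ℤ^I → 𝕜∖{0}` is a bicharacter. -/
def IsBichar (χ : (I → ℤ) → (I → ℤ) → 𝕜) : Prop :=
  (∀ a b c : I → ℤ, χ (a + b) c = χ a c * χ b c) ∧
  (∀ c a b : I → ℤ, χ c (a + b) = χ c a * χ c b) ∧
  (∀ a b : I → ℤ, χ a b ≠ 0)

/-- `χ` is `p`-finite: for every `j ≠ p` there is `m ∈ ℕ₀` with
`[m+1]_{q_{pp}} = 0` or `q_{pp}^m q_{pj} q_{jp} = 1`. -/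
def IsPFinite (χ : (I → ℤ) → (I → ℤ) → 𝕜) (p : I) : Prop :=
  ∀ j, j ≠ p → ∃ m : ℕ,
    qNat (χ (eps p) (eps p)) (m + 1) = 0 ∨
    χ (eps p) (eps p) ^ m * χ (eps p) (eps j) * χ (eps j) (eps p) = 1

open Classical in
/-- The Cartan integers `c^χ_{pj}` of a (`p`-finite) bicharacter `χ`. -/
noncomputable def cartan (χ : (I → ℤ) → (I → ℤ) → 𝕜) (p j : I) : ℤ :=
  if p = j then 2
  else if h : ∃ m : ℕ,
      qNat (χ (eps p) (eps p)) (m + 1) = 0 ∨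
      χ (eps p) (eps p) ^ m * χ (eps p) (eps j) * χ (eps j) (eps p) = 1
    then -(Nat.find h) else 0

/-- The reflection `σ_p^χ ∈ Aut(ℤ^I)`, `σ_p^χ(ε_j) = ε_j − c^χ_{pj} ε_p`
(an involution, so equal to its own inverse). -/
noncomputable def sigmaChi (χ : (I → ℤ) → (I → ℤ) → 𝕜) (p : I) (a : I → ℤ) : I → ℤ :=
  a - (∑ j, cartan χ p j * a j) • eps p

/-- `r_p(χ) = (σ_p^χ)^*χ`, i.e. `r_p(χ)(a,b) = χ((σ_p^χ)⁻¹ a, (σ_p^χ)⁻¹ b)`. -/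
noncomputable def rp (χ : (I → ℤ) → (I → ℤ) → 𝕜) (p : I) :
    (I → ℤ) → (I → ℤ) → 𝕜 :=
  fun a b => χ (sigmaChi χ p a) (sigmaChi χ p b)


section Helpers

variable {𝕜 : Type*} [Field 𝕜] {I : Type*} [Fintype I] [DecidableEq I]
variable {χ : (I → ℤ) → (I → ℤ) → 𝕜}

omit [Fintype I] [DecidableEq I] in
lemma bichar_zero_left (hχ : IsBichar χ) (b : I → ℤ) : χ 0 b = 1 := by
  have h := hχ.1 0 0 b
  rw [add_zero] at h
  exact (mul_left_cancel₀ (hχ.2.2 0 b) (by rw [mul_one, ← h])).symm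

omit [Fintype I] [DecidableEq I] in
lemma bichar_zero_right (hχ : IsBichar χ) (a : I → ℤ) : χ a 0 = 1 := by
  have h := hχ.2.1 a 0 0
  rw [add_zero] at h
  exact (mul_left_cancel₀ (hχ.2.2 a 0) (by rw [mul_one, ← h])).symm

omit [Fintype I] [DecidableEq I] in
lemma bichar_neg_left (hχ : IsBichar χ) (a b : I → ℤ) : χ (-a) b = (χ a b)⁻¹ := by
  have h := hχ.1 a (-a) b
  rw [add_neg_cancel, bichar_zero_left hχ] at h
  exact (inv_eq_of_mul_eq_one_right h.symm).symm

omit [Fintype I] [DecidableEq I] in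
lemma bichar_zsmul_left (hχ : IsBichar χ) (n : ℤ) (a b : I → ℤ) :
    χ (n • a) b = χ a b ^ n := by
  induction n using Int.induction_on with
  | zero => simpa using bichar_zero_left hχ b
  | succ k ih =>
      rw [add_smul, one_smul, hχ.1, ih, zpow_add₀ (hχ.2.2 a b), zpow_one]
  | pred k ih =>
      rw [sub_smul, one_smul, sub_eq_add_neg, hχ.1, ih, bichar_neg_left hχ,
        zpow_sub_one₀ (hχ.2.2 a b)]

omit [Fintype I] [DecidableEq I] in
lemma bichar_zsmul_right (hχ : IsBichar χ) (n : ℤ) (a b : I → ℤ) :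
    χ a (n • b) = χ a b ^ n := by
  induction n using Int.induction_on with
  | zero => simpa using bichar_zero_right hχ a
  | succ k ih =>
      rw [add_smul, one_smul, hχ.2.1, ih, zpow_add₀ (hχ.2.2 a b), zpow_one]
  | pred k ih =>
      have hneg : χ a (-b) = (χ a b)⁻¹ := by
        have h := hχ.2.1 a b (-b)
        rw [add_neg_cancel, bichar_zero_right hχ] at h
        exact (inv_eq_of_mul_eq_one_right h.symm).symm
      rw [sub_smul, one_smul, sub_eq_add_neg, hχ.2.1, ih, hneg,
        zpow_sub_one₀ (hχ.2.2 a b)]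

omit [Fintype I] [DecidableEq I] in
lemma bichar_expand (hχ : IsBichar χ) (a b e f : I → ℤ) (m n : ℤ) :
    χ (a + m • e) (b + n • f) =
      χ a b * χ a f ^ n * χ e b ^ m * (χ e f ^ m) ^ n := by
  rw [hχ.1, hχ.2.1, hχ.2.1, bichar_zsmul_left hχ, bichar_zsmul_left hχ,
    bichar_zsmul_right hχ, bichar_zsmul_right hχ, ← zpow_mul, ← zpow_mul,
    mul_comm n m]
  ring

omit [Fintype I] [DecidableEq I] in
lemma bichar_sum_left (hχ : IsBichar χ) (s : Finset I) (f : I → (I → ℤ))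
    (b : I → ℤ) : χ (∑ i ∈ s, f i) b = ∏ i ∈ s, χ (f i) b := by
  classical
  induction s using Finset.induction_on with
  | empty => simpa using bichar_zero_left hχ b
  | insert _ _ h ih => rw [Finset.sum_insert h, Finset.prod_insert h, hχ.1, ih]

omit [Fintype I] [DecidableEq I] in
lemma bichar_sum_right (hχ : IsBichar χ) (s : Finset I) (f : I → (I → ℤ))
    (a : I → ℤ) : χ a (∑ i ∈ s, f i) = ∏ i ∈ s, χ a (f i) := by
  classical
  induction s using Finset.induction_on with
  | empty => simpa using bichar_zero_right hχ a
  | insert _ _ h ih => rw [Finset.sum_insert h, Finset.prod_insert h, hχ.2.1, ih]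

omit [Fintype I] in
lemma zpow_prod_eq_sum' {q : 𝕜} (hq : q ≠ 0) (s : Finset I) (e : I → ℤ) :
    ∏ i ∈ s, q ^ (e i) = q ^ (∑ i ∈ s, e i) := by
  induction s using Finset.induction_on with
  | empty => simp
  | insert _ _ h ih => rw [Finset.prod_insert h, Finset.sum_insert h, zpow_add₀ hq, ih]

lemma pi_eq_sum_eps (a : I → ℤ) : a = ∑ i, a i • eps i := by
  funext j
  rw [Finset.sum_apply]
  simp [eps, Pi.single_apply]

end Helpers

/-- Example (ex:cartantype): if `χ` is of Cartan type with generalized Cartan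
matrix `C` (i.e. `χ` is `i`-finite with `c^χ_{ij} = c_{ij}` and
`q_{ii}^{c_{ij}} = q_{ij} q_{ji}`), then each `r_p(χ)` is again of Cartan type
with the same Cartan matrix `C`; and if moreover `q_{ij} = q^{d_i c_{ij}}`
for positive integers `d_i` with `d_i c_{ij} = d_j c_{ji}` and some
`q ∈ 𝕜∖{0}`, then `r_p(χ) = χ` for all `p`. -/
theorem cartanType_rp (χ : (I → ℤ) → (I → ℤ) → 𝕜) (hχ : IsBichar χ)
    (c : I → I → ℤ)
    (hGCM1 : ∀ i, c i i = 2)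
    (hGCM2 : ∀ i j, i ≠ j → c i j ≤ 0)
    (hGCM3 : ∀ i j, c i j = 0 → c j i = 0)
    (hfin : ∀ i, IsPFinite χ i)
    (hc : ∀ i j, cartan χ i j = c i j)
    (hCartanType : ∀ i j, χ (eps i) (eps i) ^ (c i j) =
      χ (eps i) (eps j) * χ (eps j) (eps i)) :
    (∀ p i j : I,
      rp χ p (eps i) (eps i) = χ (eps i) (eps i) ∧
      rp χ p (eps i) (eps j) * rp χ p (eps j) (eps i) =
        (rp χ p (eps i) (eps i)) ^ (c i j)) ∧
    (∀ (d : I → ℕ) (q : 𝕜), (∀ i, 0 < d i) → q ≠ 0 →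
      (∀ i j, (d i : ℤ) * c i j = (d j : ℤ) * c j i) →
      (∀ i j, χ (eps i) (eps j) = q ^ ((d i : ℤ) * c i j)) →
      ∀ p, rp χ p = χ) := by
  constructor
  · intro p i j
    have hA : χ (eps p) (eps p) ≠ 0 := hχ.2.2 _ _
    have hsig : ∀ k, sigmaChi χ p (eps k) = eps k + (-(c p k)) • eps p := by
      intro k
      unfold sigmaChi
      have hsum : (∑ j, cartan χ p j * eps k j) = c p k := by
        simp only [hc, eps, Pi.single_apply]
        simp
      rw [hsum, sub_eq_add_neg, ← neg_smul]
    have hrp : ∀ k l, rp χ p (eps k) (eps l) =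
        χ (eps k) (eps l) * χ (eps k) (eps p) ^ (-(c p l)) *
          χ (eps p) (eps l) ^ (-(c p k)) *
          (χ (eps p) (eps p) ^ (-(c p k))) ^ (-(c p l)) := by
      intro k l
      show χ (sigmaChi χ p (eps k)) (sigmaChi χ p (eps l)) = _
      rw [hsig, hsig, bichar_expand hχ]
    have hrpii : ∀ k, rp χ p (eps k) (eps k) = χ (eps k) (eps k) := by
      intro k
      rw [hrp k k]
      have key : χ (eps k) (eps p) ^ (-(c p k)) * χ (eps p) (eps k) ^ (-(c p k)) *
          (χ (eps p) (eps p) ^ (-(c p k))) ^ (-(c p k)) = 1 := by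
        rw [← mul_zpow, mul_comm (χ (eps k) (eps p)), ← hCartanType p k,
          ← zpow_mul, ← zpow_mul, ← zpow_add₀ hA,
          show c p k * -(c p k) + -(c p k) * -(c p k) = 0 by ring, zpow_zero]
      calc χ (eps k) (eps k) * χ (eps k) (eps p) ^ (-(c p k)) *
            χ (eps p) (eps k) ^ (-(c p k)) *
            (χ (eps p) (eps p) ^ (-(c p k))) ^ (-(c p k))
          = χ (eps k) (eps k) *
            (χ (eps k) (eps p) ^ (-(c p k)) * χ (eps p) (eps k) ^ (-(c p k)) *
              (χ (eps p) (eps p) ^ (-(c p k))) ^ (-(c p k))) := by ring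
        _ = χ (eps k) (eps k) := by rw [key, mul_one]
    refine ⟨hrpii i, ?_⟩
    rw [hrp i j, hrp j i, hrpii i, hCartanType i j]
    have m1 : χ (eps i) (eps p) ^ (-(c p j)) * χ (eps p) (eps i) ^ (-(c p j)) =
        (χ (eps p) (eps p) ^ (c p i)) ^ (-(c p j)) := by
      rw [← mul_zpow, mul_comm (χ (eps i) (eps p)), ← hCartanType p i]
    have m2 : χ (eps p) (eps j) ^ (-(c p i)) * χ (eps j) (eps p) ^ (-(c p i)) =
        (χ (eps p) (eps p) ^ (c p j)) ^ (-(c p i)) := by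
      rw [← mul_zpow, ← hCartanType p j]
    have key2 : (χ (eps p) (eps p) ^ (c p i)) ^ (-(c p j)) *
        (χ (eps p) (eps p) ^ (c p j)) ^ (-(c p i)) *
        (χ (eps p) (eps p) ^ (-(c p i))) ^ (-(c p j)) *
        (χ (eps p) (eps p) ^ (-(c p j))) ^ (-(c p i)) = 1 := by
      rw [← zpow_mul, ← zpow_mul, ← zpow_mul, ← zpow_mul, ← zpow_add₀ hA,
        ← zpow_add₀ hA, ← zpow_add₀ hA,
        show c p i * -(c p j) + c p j * -(c p i) + -(c p i) * -(c p j) +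
          -(c p j) * -(c p i) = 0 by ring, zpow_zero]
    calc χ (eps i) (eps j) * χ (eps i) (eps p) ^ (-(c p j)) *
          χ (eps p) (eps j) ^ (-(c p i)) *
          (χ (eps p) (eps p) ^ (-(c p i))) ^ (-(c p j)) *
          (χ (eps j) (eps i) * χ (eps j) (eps p) ^ (-(c p i)) *
            χ (eps p) (eps i) ^ (-(c p j)) *
            (χ (eps p) (eps p) ^ (-(c p j))) ^ (-(c p i)))
        = χ (eps i) (eps j) * χ (eps j) (eps i) *
          (χ (eps i) (eps p) ^ (-(c p j)) * χ (eps p) (eps i) ^ (-(c p j)) *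
            (χ (eps p) (eps j) ^ (-(c p i)) * χ (eps j) (eps p) ^ (-(c p i))) *
            (χ (eps p) (eps p) ^ (-(c p i))) ^ (-(c p j)) *
            (χ (eps p) (eps p) ^ (-(c p j))) ^ (-(c p i))) := by ring
      _ = χ (eps i) (eps j) * χ (eps j) (eps i) := by
          rw [m1, m2, key2, mul_one]
  · intro d q hdpos hq0 hsym hval p
    funext a b
    have hsigg : ∀ x : I → ℤ,
        sigmaChi χ p x = x + (-(∑ j, c p j * x j)) • eps p := by
      intro x
      unfold sigmaChi
      simp only [hc]
      rw [sub_eq_add_neg, ← neg_smul]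
    have hXleft : ∀ x : I → ℤ,
        χ x (eps p) = q ^ ((d p : ℤ) * ∑ j, c p j * x j) := by
      intro x
      conv_lhs => rw [pi_eq_sum_eps x]
      rw [bichar_sum_left hχ]
      have hterm : ∀ i ∈ Finset.univ,
          χ (x i • eps i) (eps p) = q ^ ((d p : ℤ) * (c p i * x i)) := by
        intro i _
        rw [bichar_zsmul_left hχ, hval i p, ← zpow_mul, hsym i p, mul_assoc]
      rw [Finset.prod_congr rfl hterm, zpow_prod_eq_sum' hq0, ← Finset.mul_sum]
    have hXright : ∀ x : I → ℤ,
        χ (eps p) x = q ^ ((d p : ℤ) * ∑ j, c p j * x j) := by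
      intro x
      conv_lhs => rw [pi_eq_sum_eps x]
      rw [bichar_sum_right hχ]
      have hterm : ∀ i ∈ Finset.univ,
          χ (eps p) (x i • eps i) = q ^ ((d p : ℤ) * (c p i * x i)) := by
        intro i _
        rw [bichar_zsmul_right hχ, hval p i, ← zpow_mul, mul_assoc]
      rw [Finset.prod_congr rfl hterm, zpow_prod_eq_sum' hq0, ← Finset.mul_sum]
    have hApp : χ (eps p) (eps p) = q ^ ((d p : ℤ) * 2) := by
      rw [hval p p, hGCM1 p]
    show χ (sigmaChi χ p a) (sigmaChi χ p b) = χ a b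
    rw [hsigg a, hsigg b, bichar_expand hχ, hXleft a, hXright b, hApp,
      ← zpow_mul, ← zpow_mul, ← zpow_mul, ← zpow_mul]
    have final : ∀ D A B : ℤ, χ a b * q ^ (D * A * -B) * q ^ (D * B * -A) *
        q ^ (D * 2 * (-A * -B)) = χ a b := by
      intro D A B
      calc χ a b * q ^ (D * A * -B) * q ^ (D * B * -A) * q ^ (D * 2 * (-A * -B))
          = χ a b * (q ^ (D * A * -B) * q ^ (D * B * -A) *
              q ^ (D * 2 * (-A * -B))) := by ring
        _ = χ a b := by
            rw [← zpow_add₀ hq0, ← zpow_add₀ hq0,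
              show D * A * -B + D * B * -A + D * 2 * (-A * -B) = 0 by ring,
              zpow_zero, mul_one]
    exact final (d p) (∑ j, c p j * a j) (∑ j, c p j * b j)
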